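/- Let b ∈ C_A. Then the dimension of Q_{A,b} (the dimension of its affine hull) is at most d − 1 if and only if there exists an extreme point p of Q⋄_{A,0} with bᵀp = 0. -/
import Mathlib


open scoped RealInnerProductSpace

noncomputable section

/-- `Q_{A,b} = {x ∈ ℝ^d : a_iᵀx ≤ b_i for all i}`. -/
def Qset {d N : ℕ} (a : Fin N → EuclideanSpace ℝ (Fin d)) (b : Fin N → ℝ) :
    Set (EuclideanSpace ℝ (Fin d)) :=
  {x | ∀ i, ⟪a i, x⟫ ≤ b i}

/-- `C_A = {b : for every i there is x ∈ Q_{A,b} with a_iᵀx = b_i}`. -/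
def CA {d N : ℕ} (a : Fin N → EuclideanSpace ℝ (Fin d)) : Set (Fin N → ℝ) :=
  {b | ∀ i, ∃ x ∈ Qset a b, ⟪a i, x⟫ = b i}

/-- `Q⋄_{A,0} = {q ∈ ℝ^N : q ≥ 0, Aᵀq = 0, Σ q_i = 1}`. -/
def Qdiam {d N : ℕ} (a : Fin N → EuclideanSpace ℝ (Fin d)) : Set (Fin N → ℝ) :=
  {q | (∀ i, 0 ≤ q i) ∧ ∑ i, q i • a i = 0 ∧ ∑ i, q i = 1}

/-- The dimension of a convex subset of `ℝ^d`: the dimension of (the direction of)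
its affine hull. -/
def convDim {d : ℕ} (S : Set (EuclideanSpace ℝ (Fin d))) : ℕ :=
  Module.finrank ℝ (affineSpan ℝ S).direction

lemma qd_inner_sum {d N : ℕ} {a : Fin N → EuclideanSpace ℝ (Fin d)} {q : Fin N → ℝ}
    (hq : q ∈ Qdiam a) (x : EuclideanSpace ℝ (Fin d)) :
    ∑ i, q i * ⟪a i, x⟫ = 0 := by
  have h : (⟪∑ i, q i • a i, x⟫ : ℝ) = ∑ i, q i * ⟪a i, x⟫ := by
    rw [sum_inner]
    exact Finset.sum_congr rfl fun i _ => real_inner_smul_left _ _ _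
  rw [← h, hq.2.1, inner_zero_left]

lemma bq_nonneg {d N : ℕ} {a : Fin N → EuclideanSpace ℝ (Fin d)} {b q : Fin N → ℝ}
    {x : EuclideanSpace ℝ (Fin d)} (hx : x ∈ Qset a b) (hq : q ∈ Qdiam a) :
    0 ≤ ∑ i, b i * q i := by
  have h0 := qd_inner_sum hq x
  have h1 : ∑ i, q i * ⟪a i, x⟫ ≤ ∑ i, b i * q i :=
    Finset.sum_le_sum fun i _ => by
      have := hx i; have := hq.1 i; nlinarith
  linarith

lemma backward_dir {d N : ℕ} (hd : 1 ≤ d)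
    {a : Fin N → EuclideanSpace ℝ (Fin d)} (ha_norm : ∀ i, ‖a i‖ = 1)
    {b : Fin N → ℝ} (hb : b ∈ CA a) {p : Fin N → ℝ}
    (hpQ : p ∈ Qdiam a) (hbp : ∑ i, b i * p i = 0) :
    convDim (Qset a b) ≤ d - 1 := by
  have hex : ∃ i, 0 < p i := by
    by_contra h
    push_neg at h
    have hz : ∀ i, p i = 0 := fun i => le_antisymm (h i) (hpQ.1 i)
    have := hpQ.2.2
    simp [hz] at this
  obtain ⟨i, hpi⟩ := hex
  obtain ⟨x₀, hx₀Q, -⟩ := hb i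
  have key : ∀ x ∈ Qset a b, ⟪a i, x⟫ = b i := by
    intro x hx
    have hterms : ∀ j ∈ Finset.univ, 0 ≤ p j * (b j - ⟪a j, x⟫) := fun j _ =>
      mul_nonneg (hpQ.1 j) (sub_nonneg.2 (hx j))
    have hsum0 : ∑ j, p j * (b j - ⟪a j, x⟫) = 0 := by
      have h1 := qd_inner_sum hpQ x
      have h2 : ∑ j, p j * (b j - ⟪a j, x⟫)
          = ∑ j, b j * p j - ∑ j, p j * ⟪a j, x⟫ := by
        rw [← Finset.sum_sub_distrib]
        exact Finset.sum_congr rfl fun j _ => by ring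
      rw [h2, hbp, h1]; ring
    have := (Finset.sum_eq_zero_iff_of_nonneg hterms).1 hsum0 i (Finset.mem_univ i)
    have hxi := hx i
    nlinarith
  have hai : a i ≠ 0 := by
    intro h; have := ha_norm i; rw [h] at this; simp at this
  set W := (ℝ ∙ a i)ᗮ with hW
  have hsub : Qset a b ⊆ (AffineSubspace.mk' x₀ W : Set (EuclideanSpace ℝ (Fin d))) := by
    intro x hx
    rw [AffineSubspace.mem_coe, AffineSubspace.mem_mk']
    rw [hW, Submodule.mem_orthogonal_singleton_iff_inner_right]
    have : ⟪a i, x -ᵥ x₀⟫ = ⟪a i, x⟫ - ⟪a i, x₀⟫ := inner_sub_right _ _ _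
    rw [this, key x hx, key x₀ hx₀Q, sub_self]
  have hle : affineSpan ℝ (Qset a b) ≤ AffineSubspace.mk' x₀ W :=
    affineSpan_le.2 hsub
  have hdir := AffineSubspace.direction_le hle
  rw [AffineSubspace.direction_mk'] at hdir
  have h1 : Module.finrank ℝ (affineSpan ℝ (Qset a b)).direction ≤ Module.finrank ℝ W :=
    Submodule.finrank_mono hdir
  have h2 : Module.finrank ℝ W = d - 1 := by
    have h3 := Submodule.finrank_add_finrank_orthogonal (K := ℝ ∙ a i)
    rw [finrank_span_singleton hai, ← hW] at h3
    have hE : Module.finrank ℝ (EuclideanSpace ℝ (Fin d)) = d := finrank_euclideanSpace_fin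
    omega
  unfold convDim
  omega

/-- Farkas-type: if there is no Slater point, there is `p ∈ Qdiam a` with `bᵀp ≤ 0`. -/
lemma farkas_cert {d N : ℕ} (hN : 1 ≤ N)
    {a : Fin N → EuclideanSpace ℝ (Fin d)} {b : Fin N → ℝ}
    (hns : ¬ ∃ x : EuclideanSpace ℝ (Fin d), ∀ i, ⟪a i, x⟫ < b i) :
    ∃ p ∈ Qdiam a, ∑ i, b i * p i ≤ 0 := by
  haveI : NeZero N := ⟨by omega⟩
  set O : Set (Fin N → ℝ) := {y | ∀ i, 0 < y i} with hO
  set T : Set (Fin N → ℝ) := Set.range (fun x : EuclideanSpace ℝ (Fin d) =>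
    fun i => b i - ⟪a i, x⟫) with hT
  have hO_open : IsOpen O := by
    have : O = ⋂ i, (fun y : Fin N → ℝ => y i) ⁻¹' Set.Ioi 0 := by
      ext y; simp [hO, Set.mem_iInter]
    rw [this]
    exact isOpen_iInter_of_finite fun i => (continuous_apply i).isOpen_preimage _ isOpen_Ioi
  have hO_conv : Convex ℝ O := by
    intro y hy z hz s t hs ht hst
    intro i
    simp only [Pi.add_apply, Pi.smul_apply, smul_eq_mul]
    rcases eq_or_lt_of_le hs with rfl | hs'
    · simp only [zero_mul, zero_add]
      have : t = 1 := by linarith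
      nlinarith [hz i]
    · nlinarith [hy i, hz i, mul_nonneg ht (le_of_lt (hz i))]
  have hT_conv : Convex ℝ T := by
    rintro _ ⟨x₁, rfl⟩ _ ⟨x₂, rfl⟩ s t hs ht hst
    refine ⟨s • x₁ + t • x₂, ?_⟩
    funext i
    simp only [Pi.add_apply, Pi.smul_apply, smul_eq_mul, inner_add_right,
      real_inner_smul_right]
    linear_combination (-b i) * hst
  have hdisj : Disjoint O T := by
    rw [Set.disjoint_left]
    rintro y hy ⟨x, rfl⟩
    refine hns ⟨x, fun i => ?_⟩
    have h2 : (0:ℝ) < b i - ⟪a i, x⟫ := hy i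
    linarith
  obtain ⟨f, u, hfO, hfT⟩ := geometric_hahn_banach_open hO_conv hO_open hT_conv hdisj
  set q : Fin N → ℝ := fun i => f (Pi.single i 1) with hq
  have hf_eval : ∀ y : Fin N → ℝ, f y = ∑ i, q i * y i := by
    intro y
    have hy : y = ∑ i, y i • (Pi.single i (1:ℝ) : Fin N → ℝ) := by
      conv_lhs => rw [← Finset.univ_sum_single y]
      exact Finset.sum_congr rfl fun i _ => by
        rw [← Pi.single_smul, smul_eq_mul, mul_one]
    conv_lhs => rw [hy]
    rw [map_sum]
    exact Finset.sum_congr rfl fun i _ => by rw [map_smul, smul_eq_mul, hq, mul_comm]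
  have hqle : ∀ i, q i ≤ 0 := by
    intro i
    by_contra h
    push_neg at h
    set M : ℝ := max (((u - ∑ j, q j) / q i) + 1) 1 with hM
    have hM1 : (1:ℝ) ≤ M := le_max_right _ _
    have hMt : ((u - ∑ j, q j) / q i) + 1 ≤ M := le_max_left _ _
    set y₀ : Fin N → ℝ := fun j => 1 + M * (if j = i then 1 else 0) with hy₀
    have hy₀O : y₀ ∈ O := by
      intro j
      rw [hy₀]
      dsimp only
      split <;> nlinarith
    have hlt := hfO _ hy₀O
    rw [hf_eval] at hlt
    have hsum : ∑ j, q j * y₀ j = (∑ j, q j) + M * q i := by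
      rw [hy₀]
      simp only [mul_add, mul_one, mul_ite, mul_zero]
      rw [Finset.sum_add_distrib]
      congr 1
      rw [Finset.sum_ite_eq' Finset.univ i fun j => q j * M]
      simp [mul_comm]
    rw [hsum] at hlt
    have h1 : ((u - ∑ j, q j) / q i + 1) * q i ≤ M * q i :=
      mul_le_mul_of_nonneg_right hMt (le_of_lt h)
    have h2 : ((u - ∑ j, q j) / q i + 1) * q i = (u - ∑ j, q j) + q i := by
      field_simp
    nlinarith
  have hTle : ∀ x : EuclideanSpace ℝ (Fin d), u ≤ ∑ i, q i * (b i - ⟪a i, x⟫) := by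
    intro x
    have := hfT _ ⟨x, rfl⟩
    rwa [hf_eval] at this
  have hub : u ≤ ∑ i, q i * b i := by
    have := hTle 0
    simpa using this
  have hu0 : 0 ≤ u := by
    by_contra hcon
    push_neg at hcon
    have hsq : ∑ j, q j ≤ 0 := Finset.sum_nonpos fun j _ => hqle j
    have h1 : ∀ ε : ℝ, 0 < ε → ε * ∑ j, q j < u := by
      intro ε hε
      have hyO : (fun _ => ε : Fin N → ℝ) ∈ O := fun j => hε
      have h2 := hfO _ hyO
      rw [hf_eval] at h2
      calc ε * ∑ j, q j = ∑ j, q j * ε := by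
            rw [Finset.mul_sum]; exact Finset.sum_congr rfl fun j _ => mul_comm _ _
        _ < u := h2
    rcases lt_or_ge (∑ j, q j) 0 with hlt | hge
    · have hεp : 0 < u / (2 * ∑ j, q j) := div_pos_of_neg_of_neg hcon (by linarith)
      have h3 := h1 _ hεp
      have hSne : (∑ j, q j) ≠ 0 := ne_of_lt hlt
      have h4 : u / (2 * ∑ j, q j) * ∑ j, q j = u / 2 := by
        rw [div_mul_eq_mul_div, mul_comm u (∑ j, q j), mul_comm 2 (∑ j, q j),
          mul_div_mul_left _ _ hSne]
      rw [h4] at h3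
      linarith
    · have hz : ∑ j, q j = 0 := le_antisymm hsq hge
      have h5 := h1 1 one_pos
      rw [hz] at h5
      linarith
  have hv : ∑ i, q i • a i = 0 := by
    by_contra hv0
    set v := ∑ i, q i • a i with hvdef
    have hinner : ∀ x : EuclideanSpace ℝ (Fin d), ∑ i, q i * ⟪a i, x⟫ = ⟪v, x⟫ := by
      intro x
      rw [hvdef, sum_inner]
      exact Finset.sum_congr rfl fun i _ => (real_inner_smul_left _ _ _).symm
    have hnv : (0:ℝ) < ‖v‖^2 := pow_pos (norm_pos_iff.mpr hv0) 2
    set t : ℝ := (∑ i, q i * b i - u + 1) / ‖v‖^2 with ht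
    have h6 := hTle (t • v)
    have h7 : ∑ i, q i * (b i - ⟪a i, t • v⟫) = ∑ i, q i * b i - t * ‖v‖^2 := by
      have : ∑ i, q i * (b i - ⟪a i, t • v⟫)
          = ∑ i, q i * b i - ∑ i, q i * ⟪a i, t • v⟫ := by
        rw [← Finset.sum_sub_distrib]
        exact Finset.sum_congr rfl fun i _ => by ring
      rw [this, hinner, real_inner_smul_right, real_inner_self_eq_norm_sq]
    rw [h7, ht] at h6
    rw [div_mul_cancel₀ _ (ne_of_gt hnv)] at h6
    linarith
  have hqne : ∃ i, q i < 0 := by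
    by_contra hcon
    push_neg at hcon
    have hq0 : ∀ i, q i = 0 := fun i => le_antisymm (hqle i) (hcon i)
    have h1 := hfO (fun _ => 1) (fun j => one_pos)
    rw [hf_eval] at h1
    simp only [hq0, zero_mul, Finset.sum_const_zero] at h1
    have h2 : ∑ i, q i * b i = 0 := by simp [hq0]
    rw [h2] at hub
    linarith
  obtain ⟨i₀, hi₀⟩ := hqne
  set s : ℝ := ∑ j, -q j with hs
  have hspos : 0 < s := by
    have h1 : -q i₀ ≤ s := Finset.single_le_sum (f := fun j => -q j)
      (fun j _ => neg_nonneg.mpr (hqle j)) (Finset.mem_univ i₀)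
    linarith
  refine ⟨fun j => -q j / s,
    ⟨fun j => div_nonneg (by linarith [hqle j]) (le_of_lt hspos), ?_, ?_⟩, ?_⟩
  · have h1 : ∑ j, (-q j / s) • a j = s⁻¹ • ∑ j, (-q j) • a j := by
      rw [Finset.smul_sum]
      exact Finset.sum_congr rfl fun j _ => by
        rw [smul_smul, div_eq_inv_mul]
    rw [h1]
    have h2 : ∑ j, (-q j) • a j = -∑ j, q j • a j := by
      rw [← Finset.sum_neg_distrib]
      exact Finset.sum_congr rfl fun j _ => by rw [neg_smul]
    rw [h2, hv, neg_zero, smul_zero]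
  · rw [← Finset.sum_div, ← hs, div_self (ne_of_gt hspos)]
  · have h1 : ∑ j, b j * (-q j / s) = (∑ j, -(q j * b j)) / s := by
      rw [Finset.sum_div]
      exact Finset.sum_congr rfl fun j _ => by ring
    rw [h1]
    apply div_nonpos_of_nonpos_of_nonneg _ (le_of_lt hspos)
    rw [Finset.sum_neg_distrib]
    linarith

/-- Slater point implies full dimension. -/
lemma slater_full {d N : ℕ} (hN : 1 ≤ N)
    {a : Fin N → EuclideanSpace ℝ (Fin d)} (ha_norm : ∀ i, ‖a i‖ = 1)
    {b : Fin N → ℝ} {x : EuclideanSpace ℝ (Fin d)} (hx : ∀ i, ⟪a i, x⟫ < b i) :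
    convDim (Qset a b) = d := by
  haveI : NeZero N := ⟨by omega⟩
  set ε : ℝ := Finset.univ.inf' Finset.univ_nonempty (fun i => b i - ⟪a i, x⟫) with hε
  have hεpos : 0 < ε := by
    rw [hε, Finset.lt_inf'_iff]
    intro i _
    linarith [hx i]
  have hball : Metric.ball x ε ⊆ Qset a b := by
    intro y hy i
    have h1 : ⟪a i, y⟫ = ⟪a i, x⟫ + ⟪a i, y - x⟫ := by
      rw [← inner_add_right]
      congr 1
      abel
    have hcs : ⟪a i, y - x⟫ ≤ ‖a i‖ * ‖y - x‖ := real_inner_le_norm _ _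
    rw [ha_norm i, one_mul] at hcs
    have hlt : ‖y - x‖ < ε := by rwa [Metric.mem_ball, dist_eq_norm] at hy
    have hεle : ε ≤ b i - ⟪a i, x⟫ := Finset.inf'_le _ (Finset.mem_univ i)
    linarith
  have htop : affineSpan ℝ (Qset a b) = ⊤ := by
    apply top_unique
    rw [← Metric.isOpen_ball.affineSpan_eq_top (Metric.nonempty_ball.2 hεpos)]
    exact affineSpan_mono ℝ hball
  rw [convDim, htop, AffineSubspace.direction_top]
  simp [finrank_euclideanSpace_fin]

/-- The face `F` is compact. -/
lemma face_compact {d N : ℕ} {a : Fin N → EuclideanSpace ℝ (Fin d)} {b : Fin N → ℝ} :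
    IsCompact {r : Fin N → ℝ | r ∈ Qdiam a ∧ ∑ i, b i * r i = 0} := by
  have hclosed : IsClosed {r : Fin N → ℝ | r ∈ Qdiam a ∧ ∑ i, b i * r i = 0} := by
    have h1 : IsClosed {r : Fin N → ℝ | ∀ i, 0 ≤ r i} := by
      have : {r : Fin N → ℝ | ∀ i, 0 ≤ r i} = ⋂ i, {r : Fin N → ℝ | 0 ≤ r i} := by
        ext r; simp
      rw [this]
      exact isClosed_iInter fun i => isClosed_le continuous_const (continuous_apply i)
    have h2 : IsClosed {r : Fin N → ℝ | ∑ i, r i • a i = 0} :=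
      isClosed_eq (continuous_finset_sum _ fun i _ => (continuous_apply i).smul continuous_const)
        continuous_const
    have h3 : IsClosed {r : Fin N → ℝ | ∑ i, r i = 1} :=
      isClosed_eq (continuous_finset_sum _ fun i _ => continuous_apply i) continuous_const
    have h4 : IsClosed {r : Fin N → ℝ | ∑ i, b i * r i = 0} :=
      isClosed_eq (continuous_finset_sum _ fun i _ => (continuous_apply i).const_smul (b i))
        continuous_const
    have : {r : Fin N → ℝ | r ∈ Qdiam a ∧ ∑ i, b i * r i = 0}
        = ({r | ∀ i, 0 ≤ r i} ∩ {r | ∑ i, r i • a i = 0} ∩ {r | ∑ i, r i = 1})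
          ∩ {r | ∑ i, b i * r i = 0} := by
      ext r
      simp only [Set.mem_setOf_eq, Set.mem_inter_iff, Qdiam]
      tauto
    rw [this]
    exact ((h1.inter h2).inter h3).inter h4
  have hsub : {r : Fin N → ℝ | r ∈ Qdiam a ∧ ∑ i, b i * r i = 0}
      ⊆ Set.Icc (0 : Fin N → ℝ) 1 := by
    rintro r ⟨⟨hr0, -, hr1⟩, -⟩
    constructor
    · intro i; exact hr0 i
    · intro i
      have : r i ≤ ∑ j, r j := Finset.single_le_sum (fun j _ => hr0 j) (Finset.mem_univ i)
      rw [hr1] at this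
      exact this
  exact (isCompact_Icc).of_isClosed_subset hclosed hsub

theorem stmt_13 (d N : ℕ) (hd : 1 ≤ d) (hN : 1 ≤ N)
    (a : Fin N → EuclideanSpace ℝ (Fin d))
    (ha_inj : Function.Injective a) (ha_norm : ∀ i, ‖a i‖ = 1)
    (b : Fin N → ℝ) (hb : b ∈ CA a) :
    convDim (Qset a b) ≤ d - 1 ↔
      ∃ p ∈ (Qdiam a).extremePoints ℝ, ∑ i, b i * p i = 0 := by
  constructor
  · intro hdim
    have hns : ¬ ∃ x : EuclideanSpace ℝ (Fin d), ∀ i, ⟪a i, x⟫ < b i := by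
      rintro ⟨x, hx⟩
      have := slater_full hN ha_norm hx
      omega
    obtain ⟨p₁, hp₁Q, hp₁le⟩ := farkas_cert hN hns
    obtain ⟨x₀, hx₀, -⟩ := hb ⟨0, by omega⟩
    have hp₁0 : ∑ i, b i * p₁ i = 0 := le_antisymm hp₁le (bq_nonneg hx₀ hp₁Q)
    have hFne : {r : Fin N → ℝ | r ∈ Qdiam a ∧ ∑ i, b i * r i = 0}.Nonempty :=
      ⟨p₁, hp₁Q, hp₁0⟩
    obtain ⟨p, hpF⟩ := face_compact.extremePoints_nonempty hFne
    rw [mem_extremePoints] at hpF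
    obtain ⟨⟨hpQ, hp0⟩, hpext⟩ := hpF
    refine ⟨p, ?_, hp0⟩
    rw [mem_extremePoints]
    refine ⟨hpQ, fun y hy z hz hseg => ?_⟩
    have hy0 : 0 ≤ ∑ i, b i * y i := bq_nonneg hx₀ hy
    have hz0 : 0 ≤ ∑ i, b i * z i := bq_nonneg hx₀ hz
    obtain ⟨t, s', ht, hs', hts, heq⟩ := hseg
    have h5 : ∑ i, b i * p i = t * (∑ i, b i * y i) + s' * (∑ i, b i * z i) := by
      rw [← heq, Finset.mul_sum, Finset.mul_sum, ← Finset.sum_add_distrib]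
      refine Finset.sum_congr rfl fun i _ => ?_
      simp only [Pi.add_apply, Pi.smul_apply, smul_eq_mul]
      ring
    have hy0' : ∑ i, b i * y i = 0 := by nlinarith [hp0, h5]
    have hz0' : ∑ i, b i * z i = 0 := by nlinarith [hp0, h5]
    exact hpext y ⟨hy, hy0'⟩ z ⟨hz, hz0'⟩ ⟨t, s', ht, hs', hts, heq⟩
  · rintro ⟨p, hp, hbp⟩
    exact backward_dir hd ha_norm hb hp.1 hbp
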